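/- Let b ≥ 2, ℓ ≥ 1, m = b^{ℓ+1}, G = {n ∈ [0,m) : ⌊n/b^ℓ⌋ = n mod b}, and define S(a) = -1 - ⌊a/b⌋ + Σ_{n ∈ G}(⌊(n+1)a/m⌋ - ⌊na/m⌋). For every a coprime to m with 1 ≤ a ≤ m-1, S(a) + S(m-a) = -1. -/

import Mathlib

private lemma aux_div (c N x : ℕ) (hc : 0 < c) (hx : ¬ c ∣ x) (hxN : x ≤ c * N) :
    x / c + (c * N - x) / c = N - 1 := by
  obtain ⟨q, r, hr1, hr0, hxe⟩ : ∃ q r, r < c ∧ r ≠ 0 ∧ x = c * q + r :=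
    ⟨x / c, x % c, Nat.mod_lt _ hc, fun h => hx (Nat.dvd_of_mod_eq_zero h),
      (Nat.div_add_mod x c).symm⟩
  have hxc : x / c = q := by
    rw [hxe, Nat.mul_add_div hc, Nat.div_eq_of_lt hr1]
    omega
  have hqN : q + 1 ≤ N := by
    by_contra h
    push_neg at h
    have : c * N ≤ c * q := Nat.mul_le_mul_left c (by omega)
    omega
  obtain ⟨t, ht⟩ : ∃ t, N = t + q + 1 := ⟨N - q - 1, by omega⟩
  have h2 : c * N = c * t + c * q + c := by rw [ht]; ring
  have e : c * N - x = c * t + (c - r) := by omega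
  rw [hxc, e, Nat.mul_add_div hc, Nat.div_eq_of_lt (by omega)]
  omega

theorem reflection_identity (b ℓ a : ℕ) (hb : 2 ≤ b) (hℓ : 1 ≤ ℓ)
    (ha1 : 1 ≤ a) (ha2 : a ≤ b ^ (ℓ + 1) - 1)
    (hcop : Nat.gcd a (b ^ (ℓ + 1)) = 1) :
    (fun x : ℕ => -1 - (x / b : ℕ)
        + ∑ n ∈ (Finset.range (b ^ (ℓ + 1))).filter (fun n => n / b ^ ℓ = n % b),
          (((n + 1) * x / b ^ (ℓ + 1) : ℕ) - (n * x / b ^ (ℓ + 1) : ℕ) : ℤ)) a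
      + (fun x : ℕ => -1 - (x / b : ℕ)
        + ∑ n ∈ (Finset.range (b ^ (ℓ + 1))).filter (fun n => n / b ^ ℓ = n % b),
          (((n + 1) * x / b ^ (ℓ + 1) : ℕ) - (n * x / b ^ (ℓ + 1) : ℕ) : ℤ))
        (b ^ (ℓ + 1) - a) = -1 := by
  have hb0 : 0 < b := by omega
  set m := b ^ (ℓ + 1) with hmdef
  have hmℓ : m = b ^ ℓ * b := pow_succ b ℓ
  have hbl : b ≤ b ^ ℓ := Nat.le_self_pow (by omega) b
  have hbl1 : b ^ ℓ = b ^ (ℓ - 1) * b := by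
    rw [← pow_succ]; congr 1; omega
  have hmm2 : b * b ^ ℓ = b ^ ℓ * b := Nat.mul_comm _ _
  have hmm3 : b * b ^ (ℓ - 1) = b ^ (ℓ - 1) * b := Nat.mul_comm _ _
  have hm4 : 4 ≤ m := by
    have : 2 * 2 ≤ b ^ ℓ * b := Nat.mul_le_mul (by omega) hb
    omega
  have hm0 : 0 < m := by omega
  have ham : a ≤ m - 1 := ha2
  have hcopm : Nat.Coprime a m := hcop
  -- divisibility facts
  have hdvd : ∀ k, 1 ≤ k → k ≤ m - 1 → ¬ m ∣ k * a := by
    intro k hk1 hk2 h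
    have hmk : m ∣ k := Nat.Coprime.dvd_of_dvd_mul_right hcopm.symm h
    have := Nat.le_of_dvd (by omega) hmk
    omega
  have hF : ∀ k, 1 ≤ k → k ≤ m - 1 →
      k * a / m + k * (m - a) / m = k - 1 := by
    intro k hk1 hk2
    have e : k * (m - a) = m * k - k * a := by
      have h1 : k * (m - a) + k * a = k * m := by
        rw [← Nat.mul_add]; congr 1; omega
      have h2 : k * m = m * k := Nat.mul_comm k m
      omega
    have hle : k * a ≤ m * k := by
      calc k * a ≤ k * m := Nat.mul_le_mul_left k (by omega)
      _ = m * k := Nat.mul_comm k m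
    rw [e]
    exact aux_div m k (k * a) hm0 (hdvd k hk1 hk2) hle
  -- the x/b part
  have hba : ¬ b ∣ a := by
    intro h
    have hbm : b ∣ m := by rw [hmdef]; exact dvd_pow_self b (by omega)
    have : b ∣ Nat.gcd a m := Nat.dvd_gcd h hbm
    rw [hcop] at this
    have := Nat.le_of_dvd (by omega) this
    omega
  have hab : a / b + (m - a) / b = b ^ ℓ - 1 := by
    have h := aux_div b (b ^ ℓ) a hb0 hba (by omega)
    have : b * b ^ ℓ = m := by rw [hmℓ]; ring
    rw [this] at h
    exact h
  set G := (Finset.range m).filter (fun n => n / b ^ ℓ = n % b) with hGdef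
  -- 0 and m-1 are in G
  have hG0 : 0 ∈ G := by
    rw [hGdef, Finset.mem_filter, Finset.mem_range]
    exact ⟨by omega, by simp⟩
  have hGm1 : m - 1 ∈ G := by
    have e1 : m - 1 = b ^ ℓ * (b - 1) + (b ^ ℓ - 1) := by
      have h : b ^ ℓ * (b - 1) + b ^ ℓ = b ^ ℓ * b := by
        rw [← Nat.mul_succ]; congr 1; omega
      omega
    have e2 : m - 1 = b * (b ^ ℓ - 1) + (b - 1) := by
      have h : b * (b ^ ℓ - 1) + b = b * b ^ ℓ := by
        rw [← Nat.mul_succ]; congr 1; omega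
      have h2 : b * b ^ ℓ = b ^ ℓ * b := Nat.mul_comm _ _
      omega
    have hdivv : (m - 1) / b ^ ℓ = b - 1 := by
      rw [e1, Nat.mul_add_div (by positivity), Nat.div_eq_of_lt (by omega)]
      omega
    have hmodd : (m - 1) % b = b - 1 := by
      rw [e2, Nat.mul_add_mod, Nat.mod_eq_of_lt (by omega)]
    rw [hGdef, Finset.mem_filter, Finset.mem_range]
    exact ⟨by omega, by rw [hdivv, hmodd]⟩
  -- cardinality of G
  have hcard : G.card = b ^ ℓ := by
    rw [show b ^ ℓ = (Finset.range (b ^ ℓ)).card by rw [Finset.card_range]]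
    apply Finset.card_bij' (fun n _ => n / b) (fun q _ => b * q + q / b ^ (ℓ - 1))
    · intro n hn
      rw [hGdef, Finset.mem_filter, Finset.mem_range] at hn
      rw [Finset.mem_range]
      exact Nat.div_lt_of_lt_mul (by omega)
    · intro q hq
      rw [Finset.mem_range] at hq
      have hd : q / b ^ (ℓ - 1) < b := Nat.div_lt_of_lt_mul (by omega)
      set d := q / b ^ (ℓ - 1) with hddef
      set s := q % b ^ (ℓ - 1) with hsdef
      have hsb : s < b ^ (ℓ - 1) := Nat.mod_lt _ (by positivity)
      have hqds : b ^ (ℓ - 1) * d + s = q := Nat.div_add_mod q _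
      have hrep : b * q + d = b ^ ℓ * d + (b * s + d) := by
        have : b * (b ^ (ℓ - 1) * d) = b ^ ℓ * d := by rw [hbl1]; ring
        have h2 : b * q = b * (b ^ (ℓ - 1) * d) + b * s := by
          rw [← hqds]; ring
        omega
      have hsmall : b * s + d < b ^ ℓ := by
        have : b * s + b ≤ b ^ ℓ := by
          calc b * s + b = b * (s + 1) := by ring
          _ ≤ b * b ^ (ℓ - 1) := Nat.mul_le_mul_left b (by omega)
          _ = b ^ ℓ := by rw [hbl1]; ring
        omega
      have hlt : b * q + d < m := by
        have : b ^ ℓ * d + b ^ ℓ ≤ b ^ ℓ * b := by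
          calc b ^ ℓ * d + b ^ ℓ = b ^ ℓ * (d + 1) := by ring
          _ ≤ b ^ ℓ * b := Nat.mul_le_mul_left _ (by omega)
        omega
      rw [hGdef, Finset.mem_filter, Finset.mem_range]
      refine ⟨hlt, ?_⟩
      have hdiv : (b * q + d) / b ^ ℓ = d := by
        rw [hrep, Nat.mul_add_div (by positivity), Nat.div_eq_of_lt hsmall]
        omega
      have hmod : (b * q + d) % b = d := by
        rw [Nat.mul_add_mod, Nat.mod_eq_of_lt hd]
      simp only [hdiv, hmod]
    · intro n hn
      rw [hGdef, Finset.mem_filter, Finset.mem_range] at hn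
      have h1 : n / b / b ^ (ℓ - 1) = n / b ^ ℓ := by
        rw [Nat.div_div_eq_div_mul, hmm3, ← hbl1]
      rw [h1, hn.2]
      have := Nat.div_add_mod n b
      omega
    · intro q hq
      have hd : q / b ^ (ℓ - 1) < b := by
        rw [Finset.mem_range] at hq
        exact Nat.div_lt_of_lt_mul (by omega)
      rw [Nat.mul_add_div hb0, Nat.div_eq_of_lt hd]
      omega
  -- the combined sum
  have hsum : ∑ n ∈ G, ((((n + 1) * a / m : ℕ) : ℤ) - ((n * a / m : ℕ) : ℤ))
      + ∑ n ∈ G, ((((n + 1) * (m - a) / m : ℕ) : ℤ) - ((n * (m - a) / m : ℕ) : ℤ))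
      = (b ^ ℓ : ℤ) := by
    rw [← Finset.sum_add_distrib]
    have key : ∀ n ∈ G, ((((n + 1) * a / m : ℕ) : ℤ) - ((n * a / m : ℕ) : ℤ))
        + ((((n + 1) * (m - a) / m : ℕ) : ℤ) - ((n * (m - a) / m : ℕ) : ℤ))
        = 1 + (if n = m - 1 then (1 : ℤ) else 0) - (if n = 0 then (1 : ℤ) else 0) := by
      intro n hn
      rw [hGdef, Finset.mem_filter, Finset.mem_range] at hn
      have hnm : n < m := hn.1
      rcases eq_or_ne n 0 with h0 | h0
      · subst h0
        rw [if_neg (by omega), if_pos rfl]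
        simp only [Nat.zero_mul, Nat.zero_div, Nat.zero_add, Nat.one_mul]
        rw [Nat.div_eq_of_lt (by omega), Nat.div_eq_of_lt (by omega)]
        norm_num
      rcases eq_or_ne n (m - 1) with h1 | h1
      · subst h1
        rw [if_pos rfl, if_neg h0]
        have hstep : m - 1 + 1 = m := by omega
        rw [hstep, Nat.mul_div_cancel_left a hm0, Nat.mul_div_cancel_left (m - a) hm0]
        have h2 := hF (m - 1) (by omega) (by omega)
        omega
      · rw [if_neg h1, if_neg h0]
        have h2 := hF n (by omega) (by omega)
        have h3 := hF (n + 1) (by omega) (by omega)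
        omega
    rw [Finset.sum_congr rfl key]
    rw [Finset.sum_sub_distrib, Finset.sum_add_distrib, Finset.sum_const,
      Finset.sum_ite_eq' G (m - 1) (fun _ => (1 : ℤ)),
      Finset.sum_ite_eq' G 0 (fun _ => (1 : ℤ)), if_pos hGm1, if_pos hG0, hcard]
    ring
  simp only
  have habz : ((a / b : ℕ) : ℤ) + (((m - a) / b : ℕ) : ℤ) = (b ^ ℓ : ℤ) - 1 := by
    have h1 : ((a / b + (m - a) / b : ℕ) : ℤ) = ((b ^ ℓ - 1 : ℕ) : ℤ) := by rw [hab]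
    rw [Nat.cast_add, Nat.cast_sub (Nat.one_le_pow ℓ b hb0)] at h1
    rw [Nat.cast_pow, Nat.cast_one] at h1
    exact h1
  linarith [hsum, habz]
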